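/- Let V be a finite set of variables and φ = (C_1, …, C_m) a list of m clauses over V, each consisting of exactly three pairwise distinct literals. Let G be the multigraph whose vertex set is V × Bool (the set of literals) and whose edge multiset consists of: for each variable x, exactly n_x parallel edges between (x, true) and (x, false), where n_x is the total number of occurrences of x (in either polarity) among all clauses of φ; and, for each clause C_i with literals l_1, l_2, l_3, the three edges {l_1, l_2}, {l_2, l_3}, {l_1, l_3}. Then for every natural number k: there exists an assignment of V NAE-satisfying at least k clauses of φ if and only if there is a subset S of V × Bool whose cut in G has size at least 3m + 2k. -/

import Mathlib

open Finset

/-- The size of the cut determined by `S` in the multigraph with edge family `E`: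
the number of edge indices whose edge has exactly one endpoint in `S`. -/
def cutEdges {α : Type*} [DecidableEq α] {ι : Type*} [Fintype ι]
    (E : ι → α × α) (S : Finset α) : ℕ :=
  (Finset.univ.filter fun i =>
    ((E i).1 ∈ S ∧ (E i).2 ∉ S) ∨ ((E i).1 ∉ S ∧ (E i).2 ∈ S)).card

/-- The edge family of the multigraph associated to the E3-CNF formula `φ` (clauses
indexed by `Fin m`, with three literals each, literal `j` of clause `i` being `φ i j`):
for every occurrence `(i, j)` of a variable `x` an edge between `(x, true)` and
`(x, false)` (which produces `n_x` parallel edges between the two literals of `x`), and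
for every clause the triangle on its three literals. -/
def maxCutEdges {V : Type*} {m : ℕ} (φ : Fin m → Fin 3 → V × Bool) :
    (Fin m × Fin 3) ⊕ (Fin m × Fin 3) → (V × Bool) × (V × Bool) :=
  Sum.elim
    (fun p => (((φ p.1 p.2).1, true), ((φ p.1 p.2).1, false)))
    (fun p => (φ p.1 p.2, φ p.1 (p.2 + 1)))

set_option linter.unusedSectionVars false

section Aux

variable {V : Type*} [Fintype V] [DecidableEq V] {m : ℕ}

def cutP {α : Type*} [DecidableEq α] (S : Finset α) (e : α × α) : Prop :=
  (e.1 ∈ S ∧ e.2 ∉ S) ∨ (e.1 ∉ S ∧ e.2 ∈ S)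

instance {α : Type*} [DecidableEq α] (S : Finset α) (e : α × α) : Decidable (cutP S e) := by
  unfold cutP; infer_instance

lemma cutEdges_eq (φ : Fin m → Fin 3 → V × Bool) (S : Finset (V × Bool)) :
    cutEdges (maxCutEdges φ) S =
      (∑ p : Fin m × Fin 3,
        if cutP S (((φ p.1 p.2).1, true), ((φ p.1 p.2).1, false)) then 1 else 0) +
      (∑ p : Fin m × Fin 3, if cutP S (φ p.1 p.2, φ p.1 (p.2 + 1)) then 1 else 0) := by
  rw [cutEdges, Finset.card_filter, Fintype.sum_sum_type]
  simp [maxCutEdges, cutP]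
  rw [Finset.card_filter, Finset.card_filter]
  congr 1 <;> apply Finset.sum_congr rfl <;> intro p _ <;> congr

lemma tri_count (f : Fin 3 → Bool) :
    (∑ j : Fin 3, if f j ≠ f (j + 1) then (1:ℕ) else 0) =
      if (∃ j, f j = true) ∧ (∃ j, f j = false) then 2 else 0 := by
  revert f; decide

def satSet (σ : V → Bool) : Finset (V × Bool) := univ.filter fun p => σ p.1 = p.2

lemma cut_satSet (φ : Fin m → Fin 3 → V × Bool) (σ : V → Bool) :
    cutEdges (maxCutEdges φ) (satSet σ) =
      3 * m + 2 * (Finset.univ.filter fun i : Fin m =>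
        (∃ j : Fin 3, σ (φ i j).1 = (φ i j).2) ∧
        (∃ j : Fin 3, σ (φ i j).1 ≠ (φ i j).2)).card := by
  rw [cutEdges_eq]
  have h1 : (∑ p : Fin m × Fin 3,
      if cutP (satSet σ) (((φ p.1 p.2).1, true), ((φ p.1 p.2).1, false)) then (1:ℕ) else 0)
      = 3 * m := by
    have hall : ∀ p : Fin m × Fin 3,
        cutP (satSet σ) (((φ p.1 p.2).1, true), ((φ p.1 p.2).1, false)) := by
      intro p
      simp only [cutP, satSet, Finset.mem_filter, Finset.mem_univ, true_and]
      cases h : σ (φ p.1 p.2).1 <;> simp [h]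
    rw [Finset.sum_congr rfl (fun p _ => if_pos (hall p))]
    simp [mul_comm]
  have h2 : (∑ p : Fin m × Fin 3,
      if cutP (satSet σ) (φ p.1 p.2, φ p.1 (p.2 + 1)) then (1:ℕ) else 0)
      = 2 * (Finset.univ.filter fun i : Fin m =>
        (∃ j : Fin 3, σ (φ i j).1 = (φ i j).2) ∧
        (∃ j : Fin 3, σ (φ i j).1 ≠ (φ i j).2)).card := by
    rw [Fintype.sum_prod_type]
    have hin : ∀ (i : Fin m) (j : Fin 3),
        (if cutP (satSet σ) (φ i j, φ i (j + 1)) then (1:ℕ) else 0)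
        = (if (fun j => decide (σ (φ i j).1 = (φ i j).2)) j ≠
             (fun j => decide (σ (φ i j).1 = (φ i j).2)) (j+1) then 1 else 0) := by
      intro i j
      apply if_congr _ rfl rfl
      simp only [cutP, satSet, Finset.mem_filter, Finset.mem_univ, true_and, Ne,
        decide_eq_decide]
      tauto
    have hmain : ∀ i : Fin m, (∑ j : Fin 3,
        if cutP (satSet σ) (φ i j, φ i (j + 1)) then (1:ℕ) else 0) =
        if (∃ j : Fin 3, σ (φ i j).1 = (φ i j).2) ∧
           (∃ j : Fin 3, σ (φ i j).1 ≠ (φ i j).2) then 2 else 0 := by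
      intro i
      rw [Finset.sum_congr rfl (fun j _ => hin i j), tri_count]
      apply if_congr _ rfl rfl
      simp
    rw [Finset.sum_congr rfl (fun i _ => hmain i), Finset.card_filter, Finset.mul_sum]
    apply Finset.sum_congr rfl
    intro i _
    split <;> simp
  rw [h1, h2]

def badSet (S : Finset (V × Bool)) : Finset V :=
  univ.filter fun x => ¬((x, true) ∈ S ↔ (x, false) ∉ S)

def tog (u : V × Bool) (S : Finset (V × Bool)) : Finset (V × Bool) :=
  if u ∈ S then S.erase u else insert u S

lemma mem_tog (u v : V × Bool) (S : Finset (V × Bool)) :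
    v ∈ tog u S ↔ (if v = u then u ∉ S else v ∈ S) := by
  unfold tog
  by_cases h : u ∈ S <;> by_cases hv : v = u
  · subst hv; simp [h]
  · simp [Finset.mem_erase, h, hv]
  · subst hv; simp [h]
  · simp [Finset.mem_insert, h, hv]

lemma mem_tog_ne (u v : V × Bool) (S : Finset (V × Bool)) (h : v ≠ u) :
    (v ∈ tog u S ↔ v ∈ S) := by rw [mem_tog, if_neg h]

def occ (φ : Fin m → Fin 3 → V × Bool) (u : V × Bool) : ℕ :=
  (univ.filter fun p : Fin m × Fin 3 => φ p.1 p.2 = u).card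

lemma step (φ : Fin m → Fin 3 → V × Bool) (S : Finset (V × Bool)) (x : V)
    (hx : x ∈ badSet S) :
    ∃ T, badSet T ⊆ (badSet S).erase x ∧
      cutEdges (maxCutEdges φ) S ≤ cutEdges (maxCutEdges φ) T := by
  have hxb : ¬((x, true) ∈ S ↔ (x, false) ∉ S) := by
    simpa [badSet] using hx
  have hSx : ((x, true) ∈ S ↔ (x, false) ∈ S) := by tauto
  obtain ⟨b, hb⟩ : ∃ b : Bool, 2 * occ φ (x, b) ≤ occ φ (x, true) + occ φ (x, false) := by
    rcases le_total (occ φ (x, true)) (occ φ (x, false)) with h | h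
    · exact ⟨true, by omega⟩
    · exact ⟨false, by omega⟩
  have hcons : ((x, true) ∈ tog (x, b) S ↔ (x, false) ∉ tog (x, b) S) := by
    cases b
    · rw [mem_tog_ne _ _ _ (by simp), mem_tog, if_pos rfl]
      tauto
    · rw [mem_tog, if_pos rfl, mem_tog_ne _ _ _ (by simp)]
      tauto
  refine ⟨tog (x, b) S, ?_, ?_⟩
  · -- bad set shrinks
    intro y hy
    have hyb : ¬((y, true) ∈ tog (x, b) S ↔ (y, false) ∉ tog (x, b) S) := by
      simpa [badSet] using hy
    rw [Finset.mem_erase]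
    by_cases hyx : y = x
    · exact absurd hcons (hyx ▸ hyb)
    · refine ⟨hyx, ?_⟩
      simp only [badSet, Finset.mem_filter, Finset.mem_univ, true_and]
      rw [mem_tog_ne _ _ _ (by simp [hyx]), mem_tog_ne _ _ _ (by simp [hyx])] at hyb
      exact hyb
  · -- cut does not decrease
    rw [cutEdges_eq, cutEdges_eq]
    set A := ∑ p : Fin m × Fin 3,
      if cutP S (((φ p.1 p.2).1, true), ((φ p.1 p.2).1, false)) then (1:ℕ) else 0 with hA
    set A' := ∑ p : Fin m × Fin 3,
      if cutP (tog (x, b) S) (((φ p.1 p.2).1, true), ((φ p.1 p.2).1, false)) then (1:ℕ) else 0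
      with hA'
    set B := ∑ p : Fin m × Fin 3,
      if cutP S (φ p.1 p.2, φ p.1 (p.2 + 1)) then (1:ℕ) else 0 with hB
    set B' := ∑ p : Fin m × Fin 3,
      if cutP (tog (x, b) S) (φ p.1 p.2, φ p.1 (p.2 + 1)) then (1:ℕ) else 0 with hB'
    have hcardq : (univ.filter fun p : Fin m × Fin 3 => (φ p.1 p.2).1 = x).card
        = occ φ (x, true) + occ φ (x, false) := by
      have hsplit : (univ.filter fun p : Fin m × Fin 3 => (φ p.1 p.2).1 = x)
          = (univ.filter fun p : Fin m × Fin 3 => φ p.1 p.2 = (x, true)) ∪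
            (univ.filter fun p : Fin m × Fin 3 => φ p.1 p.2 = (x, false)) := by
        rw [← Finset.filter_or]
        apply Finset.filter_congr
        intro p _
        rcases hpv : φ p.1 p.2 with ⟨y, c⟩
        cases c <;> simp [Prod.ext_iff]
      rw [hsplit, Finset.card_union_of_disjoint]
      · rfl
      · rw [Finset.disjoint_filter]
        intro p _ h1 h2
        rw [h1] at h2
        simp at h2
    have hAineq : A + (occ φ (x, true) + occ φ (x, false)) ≤ A' := by
      rw [hA, hA', ← Finset.sum_filter_add_sum_filter_not univ
          (fun p : Fin m × Fin 3 => (φ p.1 p.2).1 = x),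
        ← Finset.sum_filter_add_sum_filter_not univ
          (fun p : Fin m × Fin 3 => (φ p.1 p.2).1 = x)]
      have e1 : ∀ p ∈ univ.filter fun p : Fin m × Fin 3 => (φ p.1 p.2).1 = x,
          (if cutP S (((φ p.1 p.2).1, true), ((φ p.1 p.2).1, false)) then (1:ℕ) else 0)
            = 0 := by
        intro p hp
        rw [Finset.mem_filter] at hp
        have hc : ¬ cutP S (((φ p.1 p.2).1, true), ((φ p.1 p.2).1, false)) := by
          rw [hp.2]
          simp only [cutP]
          tauto
        rw [if_neg hc]
      have e2 : ∀ p ∈ univ.filter fun p : Fin m × Fin 3 => (φ p.1 p.2).1 = x,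
          (if cutP (tog (x, b) S) (((φ p.1 p.2).1, true), ((φ p.1 p.2).1, false)) then (1:ℕ)
            else 0) = 1 := by
        intro p hp
        rw [Finset.mem_filter] at hp
        have hc : cutP (tog (x, b) S) (((φ p.1 p.2).1, true), ((φ p.1 p.2).1, false)) := by
          rw [hp.2]
          simp only [cutP]
          tauto
        rw [if_pos hc]
      have e3 : ∀ p ∈ univ.filter fun p : Fin m × Fin 3 => ¬(φ p.1 p.2).1 = x,
          (if cutP S (((φ p.1 p.2).1, true), ((φ p.1 p.2).1, false)) then (1:ℕ) else 0)
          = (if cutP (tog (x, b) S) (((φ p.1 p.2).1, true), ((φ p.1 p.2).1, false)) then (1:ℕ)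
              else 0) := by
        intro p hp
        rw [Finset.mem_filter] at hp
        apply if_congr _ rfl rfl
        simp only [cutP]
        rw [mem_tog_ne (x, b) ((φ p.1 p.2).1, true) S
            (fun h => hp.2 (congrArg Prod.fst h)),
          mem_tog_ne (x, b) ((φ p.1 p.2).1, false) S
            (fun h => hp.2 (congrArg Prod.fst h))]
      rw [Finset.sum_congr rfl e1, Finset.sum_congr rfl e2, Finset.sum_congr rfl e3]
      rw [Finset.sum_const, Finset.sum_const, hcardq]
      simp only [smul_eq_mul, mul_zero, mul_one, zero_add]
      omega
    have hshift : (∑ p : Fin m × Fin 3, if φ p.1 (p.2 + 1) = (x, b) then (1:ℕ) else 0)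
        = ∑ p : Fin m × Fin 3, if φ p.1 p.2 = (x, b) then (1:ℕ) else 0 := by
      apply Fintype.sum_equiv
        (Equiv.prodCongr (Equiv.refl (Fin m)) (Equiv.addRight (1 : Fin 3)))
      intro p
      rfl
    have hocc1 : (∑ p : Fin m × Fin 3, if φ p.1 p.2 = (x, b) then (1:ℕ) else 0)
        = occ φ (x, b) := by
      rw [occ, Finset.card_filter]
    have hBineq : B ≤ B' + 2 * occ φ (x, b) := by
      have key : ∀ p : Fin m × Fin 3,
          (if cutP S (φ p.1 p.2, φ p.1 (p.2 + 1)) then (1:ℕ) else 0) ≤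
          (if cutP (tog (x, b) S) (φ p.1 p.2, φ p.1 (p.2 + 1)) then (1:ℕ) else 0)
            + ((if φ p.1 p.2 = (x, b) then (1:ℕ) else 0)
              + (if φ p.1 (p.2 + 1) = (x, b) then (1:ℕ) else 0)) := by
        intro p
        by_cases h1 : φ p.1 p.2 = (x, b)
        · simp only [if_pos h1]
          split_ifs <;> omega
        · by_cases h2 : φ p.1 (p.2 + 1) = (x, b)
          · simp only [if_pos h2]
            split_ifs <;> omega
          · have he : cutP (tog (x, b) S) (φ p.1 p.2, φ p.1 (p.2 + 1)) ↔
                cutP S (φ p.1 p.2, φ p.1 (p.2 + 1)) := by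
              simp only [cutP]
              rw [mem_tog_ne _ _ _ h1, mem_tog_ne _ _ _ h2]
            rw [if_neg h1, if_neg h2, if_congr he rfl rfl]
            omega
      calc B ≤ ∑ p : Fin m × Fin 3,
            ((if cutP (tog (x, b) S) (φ p.1 p.2, φ p.1 (p.2 + 1)) then (1:ℕ) else 0)
            + ((if φ p.1 p.2 = (x, b) then (1:ℕ) else 0)
              + (if φ p.1 (p.2 + 1) = (x, b) then (1:ℕ) else 0))) :=
          Finset.sum_le_sum (fun p _ => key p)
        _ = B' + 2 * occ φ (x, b) := by
          rw [Finset.sum_add_distrib, Finset.sum_add_distrib, hshift, hocc1]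
          ring
    omega

lemma exists_good (φ : Fin m → Fin 3 → V × Bool) :
    ∀ n (S : Finset (V × Bool)), (badSet S).card ≤ n →
    ∃ T, badSet T = ∅ ∧ cutEdges (maxCutEdges φ) S ≤ cutEdges (maxCutEdges φ) T := by
  intro n
  induction n with
  | zero =>
    intro S h
    exact ⟨S, Finset.card_eq_zero.mp (Nat.le_zero.mp h), le_rfl⟩
  | succ n ih =>
    intro S h
    by_cases h0 : badSet S = ∅
    · exact ⟨S, h0, le_rfl⟩
    · obtain ⟨x, hx⟩ := Finset.nonempty_iff_ne_empty.mpr h0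
      obtain ⟨T, hsub, hle⟩ := step φ S x hx
      have hc : (badSet T).card ≤ n := by
        have h1 := Finset.card_le_card hsub
        have h2 := Finset.card_erase_of_mem hx
        have h3 : 0 < (badSet S).card := Finset.card_pos.mpr ⟨x, hx⟩
        omega
      obtain ⟨U, hU, hle2⟩ := ih T hc
      exact ⟨U, hU, le_trans hle hle2⟩

theorem gap_e3naesat_to_gap_multigraph_maxcut'
    {V : Type*} [Fintype V] [DecidableEq V] {m : ℕ}
    (φ : Fin m → Fin 3 → V × Bool)
    (hdist : ∀ i : Fin m, Function.Injective (φ i)) (k : ℕ) :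
    (∃ σ : V → Bool,
      k ≤ (Finset.univ.filter fun i : Fin m =>
        (∃ j : Fin 3, σ (φ i j).1 = (φ i j).2) ∧
        (∃ j : Fin 3, σ (φ i j).1 ≠ (φ i j).2)).card) ↔
    (∃ S : Finset (V × Bool), 3 * m + 2 * k ≤ cutEdges (maxCutEdges φ) S) := by
  constructor
  · rintro ⟨σ, hσ⟩
    refine ⟨satSet σ, ?_⟩
    rw [cut_satSet]
    omega
  · rintro ⟨S, hS⟩
    obtain ⟨T, hT, hle⟩ := exists_good φ (badSet S).card S le_rfl
    have hcons : ∀ x : V, ((x, true) ∈ T ↔ (x, false) ∉ T) := by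
      intro x
      by_contra hc
      have : x ∈ badSet T := by
        simp only [badSet, Finset.mem_filter, Finset.mem_univ, true_and]
        exact hc
      rw [hT] at this
      exact absurd this (Finset.notMem_empty x)
    set σ : V → Bool := fun x => decide ((x, true) ∈ T) with hσ
    have hTS : T = satSet σ := by
      ext ⟨x, c⟩
      simp only [satSet, Finset.mem_filter, Finset.mem_univ, true_and, hσ]
      cases c
      · simp only [decide_eq_false_iff_not]
        have := hcons x
        tauto
      · simp only [decide_eq_true_eq]
    refine ⟨σ, ?_⟩
    have := hle
    rw [hTS, cut_satSet] at this
    omega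

end Aux


/-- Reduction from `E3-NAE-Sat` to `Max Cut` in multigraphs: for a formula `φ` with `m`
clauses of three pairwise distinct literals each, and for every `k`, some assignment
NAE-satisfies at least `k` clauses of `φ` iff the associated multigraph has a cut of size
at least `3m + 2k`. -/
theorem gap_e3naesat_to_gap_multigraph_maxcut
    {V : Type*} [Fintype V] [DecidableEq V] {m : ℕ}
    (φ : Fin m → Fin 3 → V × Bool)
    (hdist : ∀ i : Fin m, Function.Injective (φ i)) (k : ℕ) :
    (∃ σ : V → Bool,
      k ≤ (Finset.univ.filter fun i : Fin m =>
        (∃ j : Fin 3, σ (φ i j).1 = (φ i j).2) ∧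
        (∃ j : Fin 3, σ (φ i j).1 ≠ (φ i j).2)).card) ↔
    (∃ S : Finset (V × Bool), 3 * m + 2 * k ≤ cutEdges (maxCutEdges φ) S) := by
  exact gap_e3naesat_to_gap_multigraph_maxcut' φ hdist k
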